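/- Let Δ > 0 and let (a₁, c₁), …, (a_k, c_k) be pairs of points in ℝ² with dist(a_i, c_i) ≤ Δ for every i. If the shift b is chosen uniformly at random from [0, Δ]², then the expected number of indices i such that a_i and c_i lie in different cells of the shifted grid satisfies E[#{i : id_{Δ,b}(a_i) ≠ id_{Δ,b}(c_i)}] ≤ (2/Δ)·Σ_{i=1}^k dist(a_i, c_i). -/

import Mathlib

open MeasureTheory

noncomputable section

/-- Points in the plane with the Euclidean distance. -/
abbrev Pt := EuclideanSpace ℝ (Fin 2)

/-- The cell of the grid with side length `Δ`, shifted by `b`, containing the point `p`. -/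
def gridId (Δ : ℝ) (b : Fin 2 → ℝ) (p : Pt) : ℤ × ℤ :=
  (⌊(p 0 + b 0) / Δ⌋, ⌊(p 1 + b 1) / Δ⌋)

/-- The box `[0, Δ]²` of possible shifts. -/
def shiftBox (Δ : ℝ) : Set (Fin 2 → ℝ) := Set.Icc 0 (fun _ => Δ)

/-- The uniform (normalized Lebesgue) measure on the box `[0, Δ]²`. -/
def unifShift (Δ : ℝ) : Measure (Fin 2 → ℝ) :=
  (volume (shiftBox Δ))⁻¹ • volume.restrict (shiftBox Δ)

/-- One-dimensional key estimate (monotone version): if `x ≤ y` and `y - x ≤ Δ`, the set of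
shifts `t ∈ [0, Δ]` for which `x + t` and `y + t` fall in different cells of the 1-D grid of
side `Δ` has measure at most `y - x`. -/
lemma oneD_mono (Δ x y : ℝ) (hΔ : 0 < Δ) (hxy : x ≤ y) (hd : y - x ≤ Δ) :
    volume ({t : ℝ | ⌊(x + t) / Δ⌋ ≠ ⌊(y + t) / Δ⌋} ∩ Set.Icc 0 Δ)
      ≤ ENNReal.ofReal (y - x) := by
  set n : ℤ := ⌊x / Δ⌋ + 1 with hn
  set A : ℝ := n * Δ - y with hA
  set B : ℝ := n * Δ - x with hB
  have hxn : x < n * Δ := by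
    have h1 : x / Δ < (n : ℝ) := by
      push_cast [hn]; exact Int.lt_floor_add_one _
    calc x = x / Δ * Δ := by field_simp
    _ < n * Δ := by nlinarith
  have hnx : (n : ℝ) * Δ ≤ x + Δ := by
    have h1 : (⌊x / Δ⌋ : ℝ) ≤ x / Δ := Int.floor_le _
    have h2 : (n : ℝ) ≤ x / Δ + 1 := by push_cast [hn]; linarith
    calc (n : ℝ) * Δ ≤ (x / Δ + 1) * Δ := by nlinarith
    _ = x + Δ := by field_simp
  have hBpos : 0 < B := by simp only [hB]; linarith
  have hBA : B - A = y - x := by simp only [hA, hB]; ring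
  have hsub : {t : ℝ | ⌊(x + t) / Δ⌋ ≠ ⌊(y + t) / Δ⌋} ∩ Set.Icc 0 Δ
      ⊆ Set.Icc (max A 0) B ∪ Set.Icc (A + Δ) Δ := by
    rintro t ⟨ht, ht0, htΔ⟩
    have hle : ⌊(x + t) / Δ⌋ < ⌊(y + t) / Δ⌋ := by
      have hdd : (x + t) / Δ ≤ (y + t) / Δ := by gcongr <;> linarith
      rcases lt_or_eq_of_le (Int.floor_le_floor hdd) with h | h
      · exact h
      · exact absurd h ht
    set m : ℤ := ⌊(y + t) / Δ⌋ with hm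
    have hmlow : x + t < m * Δ := by
      have h2 : (⌊(x + t) / Δ⌋ : ℝ) + 1 ≤ (m : ℝ) := by exact_mod_cast hle
      have h3 : (x + t) / Δ < (m : ℝ) := by
        have := Int.lt_floor_add_one ((x + t) / Δ)
        calc (x + t) / Δ < (⌊(x + t) / Δ⌋ : ℝ) + 1 := this
        _ ≤ m := h2
      calc x + t = (x + t) / Δ * Δ := by field_simp
      _ < m * Δ := by nlinarith
    have hmhigh : (m : ℝ) * Δ ≤ y + t := by
      have h1 : (m : ℝ) ≤ (y + t) / Δ := Int.floor_le _
      calc (m : ℝ) * Δ ≤ (y + t) / Δ * Δ := by nlinarith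
      _ = y + t := by field_simp
    have hmn : n ≤ m := by
      have : x < (m : ℝ) * Δ := by linarith
      have h1 : (⌊x / Δ⌋ : ℝ) < m := by
        have : x / Δ < (m : ℝ) := by
          rw [div_lt_iff₀ hΔ]; linarith
        calc (⌊x / Δ⌋ : ℝ) ≤ x / Δ := Int.floor_le _
        _ < m := this
      have : ⌊x / Δ⌋ < m := by exact_mod_cast h1
      omega
    have hmn2 : m ≤ n + 1 := by
      have h1 : (m : ℝ) * Δ ≤ y + Δ := by linarith
      have h2 : (m : ℝ) * Δ < n * Δ + 2 * Δ := by linarith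
      have : (m : ℝ) < n + 2 := by nlinarith
      have : m < n + 2 := by exact_mod_cast this
      omega
    rcases eq_or_lt_of_le hmn with h | h
    · left
      have hnm : (n : ℝ) = (m : ℝ) := by exact_mod_cast h
      rw [← hnm] at hmlow hmhigh
      constructor
      · rw [max_le_iff]
        exact ⟨by simp only [hA]; linarith, ht0⟩
      · simp only [hB]; linarith
    · right
      have hm1 : m = n + 1 := by omega
      have hmr : (m : ℝ) = (n : ℝ) + 1 := by exact_mod_cast hm1
      rw [hmr] at hmhigh
      have hx : (n : ℝ) * Δ + Δ ≤ y + t := by nlinarith [hmhigh]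
      exact ⟨by simp only [hA]; linarith, htΔ⟩
  calc volume ({t : ℝ | ⌊(x + t) / Δ⌋ ≠ ⌊(y + t) / Δ⌋} ∩ Set.Icc 0 Δ)
      ≤ volume (Set.Icc (max A 0) B ∪ Set.Icc (A + Δ) Δ) := measure_mono hsub
    _ ≤ volume (Set.Icc (max A 0) B) + volume (Set.Icc (A + Δ) Δ) := measure_union_le _ _
    _ = ENNReal.ofReal (B - max A 0) + ENNReal.ofReal (Δ - (A + Δ)) := by
        rw [Real.volume_Icc, Real.volume_Icc]
    _ ≤ ENNReal.ofReal (y - x) := by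
        rcases le_or_gt 0 A with hA0 | hA0
        · rw [max_eq_left hA0]
          have : ENNReal.ofReal (Δ - (A + Δ)) = 0 := by
            rw [ENNReal.ofReal_eq_zero]; linarith
          rw [this, add_zero]
          exact ENNReal.ofReal_le_ofReal (by linarith)
        · rw [max_eq_right hA0.le, sub_zero]
          rw [← ENNReal.ofReal_add (by linarith) (by linarith)]
          exact ENNReal.ofReal_le_ofReal (by linarith)

/-- One-dimensional key estimate, symmetric version. -/
lemma oneD_abs (Δ x y : ℝ) (hΔ : 0 < Δ) (hd : |x - y| ≤ Δ) :
    volume ({t : ℝ | ⌊(x + t) / Δ⌋ ≠ ⌊(y + t) / Δ⌋} ∩ Set.Icc 0 Δ)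
      ≤ ENNReal.ofReal |x - y| := by
  rcases le_total x y with h | h
  · rw [abs_sub_comm, abs_of_nonneg (sub_nonneg.2 h)] at hd ⊢
    exact oneD_mono Δ x y hΔ h hd
  · rw [abs_of_nonneg (sub_nonneg.2 h)] at hd ⊢
    have hset : {t : ℝ | ⌊(x + t) / Δ⌋ ≠ ⌊(y + t) / Δ⌋}
        = {t : ℝ | ⌊(y + t) / Δ⌋ ≠ ⌊(x + t) / Δ⌋} := by
      ext t; simp [ne_comm]
    rw [hset]
    exact oneD_mono Δ y x hΔ h hd

/-- The volume of a cylinder set over coordinate `j` intersected with the shift box. -/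
lemma cyl_vol (Δ : ℝ) (j : Fin 2) (T : Set ℝ) :
    volume ({b : Fin 2 → ℝ | b j ∈ T} ∩ shiftBox Δ)
      = volume (T ∩ Set.Icc 0 Δ) * ENNReal.ofReal Δ := by
  have hset : {b : Fin 2 → ℝ | b j ∈ T} ∩ shiftBox Δ
      = Set.pi Set.univ (fun j' => if j' = j then T ∩ Set.Icc 0 Δ else Set.Icc 0 Δ) := by
    ext b
    simp only [shiftBox, ← Set.pi_univ_Icc, Set.mem_inter_iff, Set.mem_setOf_eq,
      Set.mem_univ_pi, Pi.zero_apply]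
    constructor
    · rintro ⟨h1, h2⟩ j'
      by_cases hj : j' = j
      · subst hj; simp [h1, h2 j']
      · simp [hj, h2 j']
    · intro h
      have hj := h j
      simp only [if_pos rfl, Set.mem_inter_iff] at hj
      refine ⟨hj.1, fun j' => ?_⟩
      by_cases hjj : j' = j
      · subst hjj; exact hj.2
      · have := h j'; simpa [hjj] using this
  rw [hset, volume_pi_pi, Fin.prod_univ_two]
  fin_cases j <;> simp [Real.volume_Icc, mul_comm]

/-- A coordinate difference is bounded by the Euclidean distance. -/
lemma abs_coord_le_dist (x y : Pt) (j : Fin 2) : |x j - y j| ≤ dist x y := by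
  rw [EuclideanSpace.dist_eq]
  have h2 : |x j - y j| ^ 2 ≤ ∑ i, dist (x i) (y i) ^ 2 := by
    have : |x j - y j| ^ 2 = dist (x j) (y j) ^ 2 := by rw [Real.dist_eq]
    rw [this]
    exact Finset.single_le_sum (f := fun i => dist (x i) (y i) ^ 2)
      (fun i _ => sq_nonneg _) (Finset.mem_univ j)
  calc |x j - y j| = Real.sqrt (|x j - y j| ^ 2) := (Real.sqrt_sq (abs_nonneg _)).symm
  _ ≤ Real.sqrt (∑ i, dist (x i) (y i) ^ 2) := Real.sqrt_le_sqrt h2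

/-- If each pair `(a i, c i)` of points is at Euclidean distance at most `Δ` and the shift `b`
is chosen uniformly at random from `[0, Δ]²`, then the expected number of indices `i` such that
`a i` and `c i` fall into different cells of the shifted grid is at most
`(2 / Δ) · Σ_i dist (a i) (c i)`. -/
theorem expected_separated_pairs_le (k : ℕ) (a c : Fin k → Pt) (Δ : ℝ) (hΔ : 0 < Δ)
    (hclose : ∀ i, dist (a i) (c i) ≤ Δ) :
    ∫ b, ((Finset.univ.filter
        (fun i : Fin k => gridId Δ b (a i) ≠ gridId Δ b (c i))).card : ℝ) ∂(unifShift Δ) ≤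
      (2 / Δ) * ∑ i, dist (a i) (c i) := by
  have hbox : volume (shiftBox Δ) = ENNReal.ofReal Δ * ENNReal.ofReal Δ := by
    rw [shiftBox, Real.volume_Icc_pi, Fin.prod_univ_two]
    norm_num
  have hbox0 : volume (shiftBox Δ) ≠ 0 := by
    rw [hbox]
    exact mul_ne_zero (ENNReal.ofReal_pos.mpr hΔ).ne' (ENNReal.ofReal_pos.mpr hΔ).ne'
  have hboxtop : volume (shiftBox Δ) ≠ ⊤ := by
    rw [hbox]
    exact ENNReal.mul_ne_top ENNReal.ofReal_ne_top ENNReal.ofReal_ne_top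
  have hprob : IsProbabilityMeasure (unifShift Δ) := ⟨by
    rw [unifShift, Measure.smul_apply, Measure.restrict_apply_univ, smul_eq_mul,
      ENNReal.inv_mul_cancel hbox0 hboxtop]⟩
  set S : Fin k → Set (Fin 2 → ℝ) :=
    fun i => {b | gridId Δ b (a i) ≠ gridId Δ b (c i)} with hS
  have hmS : ∀ i, MeasurableSet (S i) := by
    intro i
    have hg : ∀ r : Pt, Measurable fun b : Fin 2 → ℝ => gridId Δ b r := fun r =>
      Measurable.prod (Measurable.floor (((measurable_pi_apply 0).const_add _).div_const _))
        (Measurable.floor (((measurable_pi_apply 1).const_add _).div_const _))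
    exact (measurableSet_eq_fun (hg (a i)) (hg (c i))).compl
  have hrw : ∀ b, ((Finset.univ.filter
      (fun i : Fin k => gridId Δ b (a i) ≠ gridId Δ b (c i))).card : ℝ)
      = ∑ i, (S i).indicator (fun _ => (1 : ℝ)) b := by
    intro b
    rw [Finset.card_filter]
    push_cast
    refine Finset.sum_congr rfl fun i _ => ?_
    by_cases h : gridId Δ b (a i) ≠ gridId Δ b (c i) <;>
      simp [h, Set.indicator_apply, hS]
  have hint : ∀ i, Integrable ((S i).indicator (fun _ => (1 : ℝ))) (unifShift Δ) := by
    intro i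
    rw [integrable_indicator_iff (hmS i)]
    exact integrableOn_const (measure_lt_top _ _).ne
  have hterm : ∀ i, (unifShift Δ (S i)).toReal ≤ 2 / Δ * dist (a i) (c i) := by
    intro i
    set d := dist (a i) (c i) with hd
    have hd0 : 0 ≤ d := dist_nonneg
    set T : Fin 2 → Set ℝ :=
      fun j => {t : ℝ | ⌊(a i j + t) / Δ⌋ ≠ ⌊(c i j + t) / Δ⌋} with hT
    have hsub : S i ⊆ {b : Fin 2 → ℝ | b 0 ∈ T 0} ∪ {b : Fin 2 → ℝ | b 1 ∈ T 1} := by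
      intro b hb
      simp only [hS, Set.mem_setOf_eq, gridId, ne_eq, Prod.mk.injEq, not_and] at hb
      by_contra hcon
      simp only [Set.mem_union, Set.mem_setOf_eq, hT, ne_eq, not_or, not_not] at hcon
      exact hb hcon.1 hcon.2
    have hTd : ∀ j : Fin 2, volume (T j ∩ Set.Icc 0 Δ) ≤ ENNReal.ofReal d := by
      intro j
      have h1 : |a i j - c i j| ≤ d := abs_coord_le_dist (a i) (c i) j
      calc volume (T j ∩ Set.Icc 0 Δ) ≤ ENNReal.ofReal |a i j - c i j| :=
            oneD_abs Δ (a i j) (c i j) hΔ (h1.trans (hclose i))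
        _ ≤ ENNReal.ofReal d := ENNReal.ofReal_le_ofReal h1
    have hvol : volume (S i ∩ shiftBox Δ)
        ≤ ENNReal.ofReal (2 * d) * ENNReal.ofReal Δ := by
      calc volume (S i ∩ shiftBox Δ)
          ≤ volume (({b : Fin 2 → ℝ | b 0 ∈ T 0} ∩ shiftBox Δ)
            ∪ ({b : Fin 2 → ℝ | b 1 ∈ T 1} ∩ shiftBox Δ)) := by
            apply measure_mono
            rw [← Set.union_inter_distrib_right]
            exact Set.inter_subset_inter_left _ hsub
        _ ≤ volume ({b : Fin 2 → ℝ | b 0 ∈ T 0} ∩ shiftBox Δ)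
            + volume ({b : Fin 2 → ℝ | b 1 ∈ T 1} ∩ shiftBox Δ) := measure_union_le _ _
        _ = volume (T 0 ∩ Set.Icc 0 Δ) * ENNReal.ofReal Δ
            + volume (T 1 ∩ Set.Icc 0 Δ) * ENNReal.ofReal Δ := by
            rw [cyl_vol, cyl_vol]
        _ ≤ ENNReal.ofReal d * ENNReal.ofReal Δ + ENNReal.ofReal d * ENNReal.ofReal Δ := by
            gcongr
            · exact hTd 0
            · exact hTd 1
        _ = ENNReal.ofReal (2 * d) * ENNReal.ofReal Δ := by
            rw [two_mul, ENNReal.ofReal_add hd0 hd0, add_mul]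
    have happ : unifShift Δ (S i)
        = (volume (shiftBox Δ))⁻¹ * volume (S i ∩ shiftBox Δ) := by
      rw [unifShift, Measure.smul_apply, Measure.restrict_apply (hmS i), smul_eq_mul]
    have h1 : (volume (shiftBox Δ)).toReal = Δ * Δ := by
      rw [hbox, ENNReal.toReal_mul, ENNReal.toReal_ofReal hΔ.le]
    have h2 : (volume (S i ∩ shiftBox Δ)).toReal ≤ 2 * d * Δ := by
      have h3 := ENNReal.toReal_mono
        (ENNReal.mul_ne_top ENNReal.ofReal_ne_top ENNReal.ofReal_ne_top) hvol
      rwa [ENNReal.toReal_mul, ENNReal.toReal_ofReal (by positivity),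
        ENNReal.toReal_ofReal hΔ.le] at h3
    rw [happ, ENNReal.toReal_mul, ENNReal.toReal_inv, h1]
    calc (Δ * Δ)⁻¹ * (volume (S i ∩ shiftBox Δ)).toReal
        ≤ (Δ * Δ)⁻¹ * (2 * d * Δ) := by
          apply mul_le_mul_of_nonneg_left h2 (by positivity)
      _ = 2 / Δ * d := by field_simp
  calc ∫ b, ((Finset.univ.filter
        (fun i : Fin k => gridId Δ b (a i) ≠ gridId Δ b (c i))).card : ℝ) ∂(unifShift Δ)
      = ∫ b, ∑ i, (S i).indicator (fun _ => (1 : ℝ)) b ∂(unifShift Δ) := by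
        apply integral_congr_ae
        filter_upwards with b using hrw b
    _ = ∑ i, ∫ b, (S i).indicator (fun _ => (1 : ℝ)) b ∂(unifShift Δ) :=
        integral_finset_sum _ (fun i _ => hint i)
    _ = ∑ i, (unifShift Δ (S i)).toReal := by
        refine Finset.sum_congr rfl fun i _ => ?_
        rw [integral_indicator_const (1 : ℝ) (hmS i), smul_eq_mul, mul_one, measureReal_def]
    _ ≤ ∑ i, 2 / Δ * dist (a i) (c i) := Finset.sum_le_sum fun i _ => hterm i
    _ = 2 / Δ * ∑ i, dist (a i) (c i) := by rw [Finset.mul_sum]
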